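/- For updown categories C and D, the object generating functions satisfy O_{C×D}(t) = O_C(t)·O_D(t), and the morphism generating functions satisfy M_{C×D}(t) = M_C(t)·O_D(t²) + O_C(t²)·M_D(t). -/

import Mathlib

structure UDData where
  Obj : Type
  Hom : Obj → Obj → Type
  idm : ∀ p, Hom p p
  comp : ∀ {p q r : Obj}, Hom p q → Hom q r → Hom p r
  idm_comp : ∀ {p q : Obj} (f : Hom p q), comp (idm p) f = f
  comp_idm : ∀ {p q : Obj} (f : Hom p q), comp f (idm q) = f
  comp_assoc : ∀ {p q r s : Obj} (f : Hom p q) (g : Hom q r) (h : Hom r s),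
    comp (comp f g) h = comp f (comp g h)
  rank : Obj → ℕ
  zhat : Obj

namespace UDData

def cast {C : UDData} {p q q' : C.Obj} (h : q = q') (f : C.Hom p q) : C.Hom p q' := h ▸ f

def Chain (C : UDData) : ℕ → C.Obj → C.Obj → Type
  | 0, p, q => PLift (p = q)
  | n + 1, p, q => (r : C.Obj) × C.Chain n p r × {f : C.Hom r q // C.rank q = C.rank r + 1}

structure IsUpdown (C : UDData) : Prop where
  rank_finite : ∀ n : ℕ, {p : C.Obj | C.rank p = n}.Finite
  hom_finite : ∀ p q : C.Obj, Finite (C.Hom p q)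
  rank_zhat : C.rank C.zhat = 0
  zhat_unique : ∀ p : C.Obj, C.rank p = 0 → p = C.zhat
  from_zhat : ∀ p : C.Obj, Nonempty (C.Hom C.zhat p)
  hom_rank : ∀ p q : C.Obj, Nonempty (C.Hom p q) → C.rank p < C.rank q ∨ p = q
  aut_inv : ∀ (p : C.Obj) (f : C.Hom p p),
    ∃ g : C.Hom p p, C.comp f g = C.idm p ∧ C.comp g f = C.idm p
  factor : ∀ {p q : C.Obj} (f : C.Hom p q), C.rank p < C.rank q →
    ∃ (r : C.Obj) (g : C.Hom p r) (h : C.Hom r q),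
      C.rank r = C.rank p + 1 ∧ C.comp g h = f
  pre_free : ∀ {p q : C.Obj}, C.rank q = C.rank p + 1 → ∀ (a : C.Hom p p) (f : C.Hom p q),
    C.comp a f = f → a = C.idm p
  post_free : ∀ {p q : C.Obj}, C.rank q = C.rank p + 1 → ∀ (b : C.Hom q q) (f : C.Hom p q),
    C.comp f b = f → b = C.idm q

variable (C : UDData)

noncomputable def nAut (p : C.Obj) : ℕ := Nat.card (C.Hom p p)

noncomputable def u (p q : C.Obj) : ℕ := Nat.card (C.Hom p q) / C.nAut q

noncomputable def d (p q : C.Obj) : ℕ := Nat.card (C.Hom p q) / C.nAut p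

noncomputable def uStep (p q : C.Obj) : ℕ := if C.rank q = C.rank p + 1 then C.u p q else 0

noncomputable def dStep (p q : C.Obj) : ℕ := if C.rank q = C.rank p + 1 then C.d p q else 0

open Classical in
noncomputable def uext (C : UDData) : ℕ → C.Obj → C.Obj → ℕ
  | 0, p, q => if p = q then 1 else 0
  | n + 1, p, q => ∑ᶠ r : C.Obj, C.uext n p r * C.uStep r q

open Classical in
noncomputable def dext (C : UDData) : ℕ → C.Obj → C.Obj → ℕ
  | 0, p, q => if p = q then 1 else 0
  | n + 1, p, q => ∑ᶠ r : C.Obj, C.dext n p r * C.dStep r q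

noncomputable def uE (p q : C.Obj) : ℕ := C.uext (C.rank q - C.rank p) p q

noncomputable def dE (p q : C.Obj) : ℕ := C.dext (C.rank q - C.rank p) p q

def Univalent (C : UDData) : Prop := ∀ p : C.Obj, Subsingleton (C.Hom p p)

def Simple (C : UDData) : Prop :=
  (∀ p q : C.Obj, Subsingleton (C.Hom p q)) ∧
    ∀ (n : ℕ) (p q : C.Obj), Subsingleton (C.Chain n p q)

def EUC (C : UDData) (u : ℕ → ℕ) : Prop :=
  ∀ p : C.Obj, (∑ᶠ q : C.Obj, C.uStep p q) = u (C.rank p)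

def EDC (C : UDData) (d : ℕ → ℕ) : Prop :=
  ∀ p : C.Obj, (∑ᶠ q : C.Obj, C.dStep q p) = d (C.rank p)

def Factorial (C : UDData) : Prop :=
  ∀ p : C.Obj, (∑ᶠ q : C.Obj, C.dStep q p) = C.rank p

def prod (C D : UDData) : UDData where
  Obj := C.Obj × D.Obj
  Hom := fun p q => C.Hom p.1 q.1 × D.Hom p.2 q.2
  idm := fun p => (C.idm p.1, D.idm p.2)
  comp := fun f g => (C.comp f.1 g.1, D.comp f.2 g.2)
  idm_comp := by intro p q f; cases f; simp [C.idm_comp, D.idm_comp]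
  comp_idm := by intro p q f; cases f; simp [C.comp_idm, D.comp_idm]
  comp_assoc := by intro p q r s f g h; simp [C.comp_assoc, D.comp_assoc]
  rank := fun p => C.rank p.1 + D.rank p.2
  zhat := (C.zhat, D.zhat)

structure Mor (C D : UDData) where
  obj : C.Obj → D.Obj
  map : ∀ {p q : C.Obj}, C.Hom p q → D.Hom (obj p) (obj q)
  map_idm : ∀ p : C.Obj, map (C.idm p) = D.idm (obj p)
  map_comp : ∀ {p q r : C.Obj} (f : C.Hom p q) (g : C.Hom q r),
    map (C.comp f g) = D.comp (map f) (map g)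
  rank_eq : ∀ p : C.Obj, D.rank (obj p) = C.rank p

def Mor.comp {C D E : UDData} (F : Mor C D) (G : Mor D E) : Mor C E where
  obj := fun p => G.obj (F.obj p)
  map := fun f => G.map (F.map f)
  map_idm := by intro p; show G.map (F.map (C.idm p)) = _; rw [F.map_idm, G.map_idm]
  map_comp := by
    intro p q r f g
    show G.map (F.map (C.comp f g)) = E.comp (G.map (F.map f)) (G.map (F.map g))
    rw [F.map_comp, G.map_comp]
  rank_eq := by intro p; rw [G.rank_eq, F.rank_eq]

structure Mor.IsGood {C D : UDData} (F : Mor C D) : Prop where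
  aut_inj : ∀ p : C.Obj, Function.Injective fun a : C.Hom p p => F.map a
  pre_quot_inj : ∀ {p q₁ q₂ : C.Obj} (f₁ : C.Hom p q₁) (f₂ : C.Hom p q₂),
    C.rank q₁ = C.rank p + 1 → C.rank q₂ = C.rank p + 1 →
    ∀ h : F.obj q₁ = F.obj q₂,
      (∃ a : D.Hom (F.obj p) (F.obj p),
        D.comp a (UDData.cast h (F.map f₁)) = F.map f₂) →
      ∃ e : q₁ = q₂, ∃ a : C.Hom p p, C.comp a (UDData.cast e f₁) = f₂
  post_quot_inj : ∀ {p q₁ q₂ : C.Obj} (f₁ : C.Hom p q₁) (f₂ : C.Hom p q₂),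
    C.rank q₁ = C.rank p + 1 → C.rank q₂ = C.rank p + 1 →
    ∀ h : F.obj q₁ = F.obj q₂,
      (∃ b : D.Hom (F.obj q₂) (F.obj q₂),
        D.comp (UDData.cast h (F.map f₁)) b = F.map f₂) →
      ∃ e : q₁ = q₂, ∃ b : C.Hom q₂ q₂, C.comp (UDData.cast e f₁) b = f₂

def Mor.IsCovering {C' C : UDData} (F : Mor C' C) : Prop :=
  Function.Surjective F.obj ∧
    ∀ p q : C'.Obj, C'.rank q = C'.rank p + 1 →
      Function.Bijective fun x : (q' : {q' : C'.Obj // F.obj q' = F.obj q}) × C'.Hom p q'.1 =>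
        UDData.cast x.1.2 (F.map x.2)

noncomputable def objCoeff (n : ℕ) : ℚ :=
  ∑ᶠ p : C.Obj, if C.rank p = n then ((C.nAut p : ℚ))⁻¹ else 0

noncomputable def objGF : PowerSeries ℚ := PowerSeries.mk C.objCoeff

noncomputable def morGF : PowerSeries ℚ :=
  PowerSeries.mk fun n =>
    ∑ᶠ p : C.Obj, ∑ᶠ q : C.Obj,
      if C.rank p + C.rank q = n then (C.uStep p q : ℚ) * ((C.nAut p : ℚ))⁻¹ else 0

noncomputable def sqSub (f : PowerSeries ℚ) : PowerSeries ℚ :=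
  PowerSeries.mk fun n => if 2 ∣ n then PowerSeries.coeff (R := ℚ) (n / 2) f else 0

noncomputable def coverCard (n : ℕ) : ℕ := Nat.card ((q : C.Obj) × C.Chain n C.zhat q)

noncomputable def inprod (f g : C.Obj → ℚ) : ℚ := ∑ᶠ p : C.Obj, f p * g p * C.nAut p

noncomputable def Uop (f : C.Obj → ℚ) : C.Obj → ℚ := fun q => ∑ᶠ p : C.Obj, f p * C.uStep p q

noncomputable def Dop (f : C.Obj → ℚ) : C.Obj → ℚ := fun p => ∑ᶠ q : C.Obj, f q * C.dStep p q

end UDData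

section Aux

open Finset Classical

namespace UDAux

noncomputable section

variable (C : UDData)

lemma nAut_pos (hC : C.IsUpdown) (p : C.Obj) : 0 < C.nAut p := by
  have := hC.hom_finite p p
  exact @Nat.card_pos _ ⟨C.idm p⟩ _

lemma rankLe_finite (hC : C.IsUpdown) (n : ℕ) : {p : C.Obj | C.rank p ≤ n}.Finite := by
  refine ((Set.finite_Iic n).biUnion fun k _ => hC.rank_finite k).subset fun p hp => ?_
  exact Set.mem_biUnion hp rfl

def rb (hC : C.IsUpdown) (n : ℕ) : Finset C.Obj := (rankLe_finite C hC n).toFinset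

lemma mem_rb (hC : C.IsUpdown) (n : ℕ) {p : C.Obj} : p ∈ rb C hC n ↔ C.rank p ≤ n :=
  Set.Finite.mem_toFinset _

variable {C}

lemma nAut_prod (D : UDData) (x : C.Obj × D.Obj) :
    (C.prod D).nAut x = C.nAut x.1 * D.nAut x.2 := by
  show Nat.card (C.Hom x.1 x.1 × D.Hom x.2 x.2) = _
  exact Nat.card_prod _ _

lemma uStep_prod {D : UDData} (hC : C.IsUpdown) (hD : D.IsUpdown) (x y : C.Obj × D.Obj) :
    (C.prod D).uStep x y =
      (if x.2 = y.2 then C.uStep x.1 y.1 else 0) +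
      (if x.1 = y.1 then D.uStep x.2 y.2 else 0) := by
  obtain ⟨x1, x2⟩ := x
  obtain ⟨y1, y2⟩ := y
  have hcard : ∀ a b : C.Obj, ∀ c d : D.Obj,
      Nat.card ((C.prod D).Hom (a, c) (b, d)) = Nat.card (C.Hom a b) * Nat.card (D.Hom c d) :=
    fun a b c d => Nat.card_prod _ _
  simp only [UDData.uStep, UDData.u, UDData.nAut, UDData.prod] at *
  by_cases h : C.rank y1 + D.rank y2 = C.rank x1 + D.rank x2 + 1
  · erw [if_pos h]
    by_cases e1 : x1 = y1
    · subst e1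
      have h2 : D.rank y2 = D.rank x2 + 1 := by omega
      have hne : ¬ x2 = y2 := fun e => by subst e; omega
      rw [if_neg hne, if_pos rfl, if_pos h2, zero_add]
      rw [hcard, hcard]
      exact Nat.mul_div_mul_left _ _ (nAut_pos C hC x1)
    · by_cases e2 : x2 = y2
      · subst e2
        have h1 : C.rank y1 = C.rank x1 + 1 := by omega
        rw [if_pos rfl, if_neg e1, if_pos h1, add_zero]
        rw [hcard, hcard]
        exact Nat.mul_div_mul_right _ _ (nAut_pos D hD x2)
      · rw [if_neg e2, if_neg e1, add_zero, hcard]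
        rcases Nat.eq_zero_or_pos (Nat.card (C.Hom x1 y1)) with h0 | hp1
        · rw [h0, zero_mul, Nat.zero_div]
        rcases Nat.eq_zero_or_pos (Nat.card (D.Hom x2 y2)) with h0 | hp2
        · rw [h0, mul_zero, Nat.zero_div]
        have n1 : Nonempty (C.Hom x1 y1) := (Nat.card_pos_iff.mp hp1).1
        have n2 : Nonempty (D.Hom x2 y2) := (Nat.card_pos_iff.mp hp2).1
        rcases hC.hom_rank _ _ n1 with hr1 | hr1
        · rcases hD.hom_rank _ _ n2 with hr2 | hr2
          · omega
          · exact absurd hr2 e2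
        · exact absurd hr1 e1
  · erw [if_neg h]
    by_cases e2 : x2 = y2
    · subst e2
      have : ¬ C.rank y1 = C.rank x1 + 1 := by omega
      rw [if_pos rfl, if_neg this]
      by_cases e1 : x1 = y1
      · subst e1
        have : ¬ D.rank x2 = D.rank x2 + 1 := by omega
        rw [if_pos rfl, if_neg this]
      · rw [if_neg e1]
    · rw [if_neg e2, zero_add]
      by_cases e1 : x1 = y1
      · subst e1
        have : ¬ D.rank y2 = D.rank x2 + 1 := by omega
        rw [if_pos rfl, if_neg this]
      · rw [if_neg e1]

lemma collapse (n a b : ℕ) (x y : ℚ) :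
    ∑ ij ∈ Finset.HasAntidiagonal.antidiagonal n,
      (if a = ij.1 then x else 0) * (if b = ij.2 then y else 0) =
      if a + b = n then x * y else 0 := by
  have key : ∀ ij ∈ Finset.HasAntidiagonal.antidiagonal n,
      (if a = ij.1 then x else 0) * (if b = ij.2 then y else 0) =
      if ij = (a, b) then x * y else 0 := by
    rintro ⟨i, j⟩ _
    have hiff : ((i, j) = (a, b)) ↔ (a = i ∧ b = j) := by
      simp [Prod.ext_iff]; omega
    by_cases h1 : a = i <;> by_cases h2 : b = j <;>
      simp [h1, h2, hiff] <;> intro h <;> omega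
  rw [Finset.sum_congr rfl key, Finset.sum_ite_eq' (Finset.HasAntidiagonal.antidiagonal n) (a, b)
    (fun _ => x * y)]
  simp [Finset.mem_antidiagonal]

lemma objCoeff_eq_sum (hC : C.IsUpdown) {n m : ℕ} (hnm : n ≤ m) :
    C.objCoeff n = ∑ p ∈ rb C hC m, if C.rank p = n then ((C.nAut p : ℚ))⁻¹ else 0 := by
  refine finsum_eq_sum_of_support_subset _ fun p hp => ?_
  have : C.rank p = n := by
    by_contra hc
    simp [Function.mem_support, hc] at hp
  exact (mem_rb C hC m).2 (by omega)

lemma objGF_coeff (n : ℕ) : (PowerSeries.coeff (R := ℚ) n) C.objGF = C.objCoeff n := by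
  rw [UDData.objGF, PowerSeries.coeff_mk]

lemma morGF_coeff_eq (hC : C.IsUpdown) {n m : ℕ} (hnm : n ≤ m) :
    (PowerSeries.coeff (R := ℚ) n) C.morGF = ∑ p ∈ rb C hC m, ∑ q ∈ rb C hC m,
      (if C.rank p + C.rank q = n then (C.uStep p q : ℚ) * ((C.nAut p : ℚ))⁻¹ else 0) := by
  rw [UDData.morGF, PowerSeries.coeff_mk]
  have h1 : ∀ p : C.Obj,
      (∑ᶠ q : C.Obj, if C.rank p + C.rank q = n then (C.uStep p q : ℚ) * ((C.nAut p : ℚ))⁻¹ else 0)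
      = ∑ q ∈ rb C hC m,
        (if C.rank p + C.rank q = n then (C.uStep p q : ℚ) * ((C.nAut p : ℚ))⁻¹ else 0) := by
    intro p
    refine finsum_eq_sum_of_support_subset _ fun q hq => ?_
    have : C.rank p + C.rank q = n := by
      by_contra hc
      simp [Function.mem_support, hc] at hq
    exact (mem_rb C hC m).2 (by omega)
  rw [finsum_congr h1]
  refine finsum_eq_sum_of_support_subset _ fun p hp => ?_
  obtain ⟨q, hq, hne⟩ := Finset.exists_ne_zero_of_sum_ne_zero hp
  have : C.rank p + C.rank q = n := by
    by_contra hc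
    simp [hc] at hne
  exact (mem_rb C hC m).2 (by omega)

end

end UDAux

end Aux

section Aux2

namespace UDAux

variable {C D : UDData}

lemma objGF_prod_coeff (hC : C.IsUpdown) (hD : D.IsUpdown) (n : ℕ) :
    (PowerSeries.coeff (R := ℚ) n) ((C.prod D).objGF)
      = ∑ p ∈ rb C hC n, ∑ q ∈ rb D hD n,
          (if C.rank p + D.rank q = n then ((C.nAut p : ℚ))⁻¹ * ((D.nAut q : ℚ))⁻¹ else 0) := by
  rw [UDData.objGF, PowerSeries.coeff_mk, UDData.objCoeff]
  show (∑ᶠ x : C.Obj × D.Obj,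
      if C.rank x.1 + D.rank x.2 = n then (((C.prod D).nAut x : ℚ))⁻¹ else 0) = _
  have step1 : (∑ᶠ x : C.Obj × D.Obj,
        if C.rank x.1 + D.rank x.2 = n then (((C.prod D).nAut x : ℚ))⁻¹ else 0)
      = ∑ x ∈ (rb C hC n) ×ˢ (rb D hD n),
        (if C.rank x.1 + D.rank x.2 = n then (((C.prod D).nAut x : ℚ))⁻¹ else 0) := by
    refine finsum_eq_sum_of_support_subset _ fun x hx => ?_
    have hr : C.rank x.1 + D.rank x.2 = n := by
      by_contra hc
      simp [Function.mem_support, hc] at hx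
    exact Finset.mem_coe.2 (Finset.mem_product.2
      ⟨(mem_rb C hC n).2 (by omega), (mem_rb D hD n).2 (by omega)⟩)
  rw [step1, Finset.sum_product]
  refine Finset.sum_congr rfl fun p _ => Finset.sum_congr rfl fun q _ => ?_
  rw [nAut_prod, Nat.cast_mul, mul_inv]

lemma morGF_prod_coeff (hC : C.IsUpdown) (hD : D.IsUpdown) (n : ℕ) :
    (PowerSeries.coeff (R := ℚ) n) ((C.prod D).morGF)
      = ∑ p1 ∈ rb C hC n, ∑ p2 ∈ rb D hD n, ∑ q1 ∈ rb C hC n, ∑ q2 ∈ rb D hD n,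
          (if (C.rank p1 + D.rank p2) + (C.rank q1 + D.rank q2) = n then
            (((C.prod D).uStep (p1, p2) (q1, q2) : ℕ) : ℚ)
              * (((C.prod D).nAut (p1, p2) : ℚ))⁻¹ else 0) := by
  rw [UDData.morGF, PowerSeries.coeff_mk]
  show (∑ᶠ x : C.Obj × D.Obj, ∑ᶠ y : C.Obj × D.Obj,
      if (C.rank x.1 + D.rank x.2) + (C.rank y.1 + D.rank y.2) = n then
        (((C.prod D).uStep x y : ℕ) : ℚ) * (((C.prod D).nAut x : ℚ))⁻¹ else 0) = _
  have h1 : ∀ x : C.Obj × D.Obj,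
      (∑ᶠ y : C.Obj × D.Obj,
        if (C.rank x.1 + D.rank x.2) + (C.rank y.1 + D.rank y.2) = n then
          (((C.prod D).uStep x y : ℕ) : ℚ) * (((C.prod D).nAut x : ℚ))⁻¹ else 0)
      = ∑ y ∈ (rb C hC n) ×ˢ (rb D hD n),
        (if (C.rank x.1 + D.rank x.2) + (C.rank y.1 + D.rank y.2) = n then
          (((C.prod D).uStep x y : ℕ) : ℚ) * (((C.prod D).nAut x : ℚ))⁻¹ else 0) := by
    intro x
    refine finsum_eq_sum_of_support_subset _ fun y hy => ?_
    have hr : (C.rank x.1 + D.rank x.2) + (C.rank y.1 + D.rank y.2) = n := by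
      by_contra hc
      simp [Function.mem_support, hc] at hy
    exact Finset.mem_coe.2 (Finset.mem_product.2
      ⟨(mem_rb C hC n).2 (by omega), (mem_rb D hD n).2 (by omega)⟩)
  rw [finsum_congr h1]
  have h2 : (∑ᶠ x : C.Obj × D.Obj, ∑ y ∈ (rb C hC n) ×ˢ (rb D hD n),
        (if (C.rank x.1 + D.rank x.2) + (C.rank y.1 + D.rank y.2) = n then
          (((C.prod D).uStep x y : ℕ) : ℚ) * (((C.prod D).nAut x : ℚ))⁻¹ else 0))
      = ∑ x ∈ (rb C hC n) ×ˢ (rb D hD n), ∑ y ∈ (rb C hC n) ×ˢ (rb D hD n),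
        (if (C.rank x.1 + D.rank x.2) + (C.rank y.1 + D.rank y.2) = n then
          (((C.prod D).uStep x y : ℕ) : ℚ) * (((C.prod D).nAut x : ℚ))⁻¹ else 0) := by
    refine finsum_eq_sum_of_support_subset _ fun x hx => ?_
    obtain ⟨y, hy, hne⟩ := Finset.exists_ne_zero_of_sum_ne_zero hx
    have hr : (C.rank x.1 + D.rank x.2) + (C.rank y.1 + D.rank y.2) = n := by
      by_contra hc
      simp [hc] at hne
    exact Finset.mem_coe.2 (Finset.mem_product.2
      ⟨(mem_rb C hC n).2 (by omega), (mem_rb D hD n).2 (by omega)⟩)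
  rw [h2, Finset.sum_product]
  refine Finset.sum_congr rfl fun p1 _ => Finset.sum_congr rfl fun p2 _ => ?_
  rw [Finset.sum_product]

end UDAux

end Aux2

theorem updown_prod_genfun (C D : UDData) (hC : C.IsUpdown) (hD : D.IsUpdown) :
    (C.prod D).objGF = C.objGF * D.objGF ∧
    (C.prod D).morGF = C.morGF * UDData.sqSub D.objGF + UDData.sqSub C.objGF * D.morGF := by
  classical
  constructor
  · ext n
    rw [PowerSeries.coeff_mul, UDAux.objGF_prod_coeff hC hD n]
    have hterm : ∀ ij ∈ Finset.HasAntidiagonal.antidiagonal n,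
        (PowerSeries.coeff (R := ℚ) ij.1) C.objGF * (PowerSeries.coeff (R := ℚ) ij.2) D.objGF
        = ∑ p ∈ UDAux.rb C hC n, ∑ q ∈ UDAux.rb D hD n,
            (if C.rank p = ij.1 then ((C.nAut p : ℚ))⁻¹ else 0)
              * (if D.rank q = ij.2 then ((D.nAut q : ℚ))⁻¹ else 0) := by
      rintro ⟨i, j⟩ hij
      rw [Finset.HasAntidiagonal.mem_antidiagonal] at hij
      rw [UDAux.objGF_coeff, UDAux.objGF_coeff,
        UDAux.objCoeff_eq_sum hC (show i ≤ n by omega),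
        UDAux.objCoeff_eq_sum hD (show j ≤ n by omega), Finset.sum_mul]
      exact Finset.sum_congr rfl fun p _ => Finset.mul_sum _ _ _
    rw [Finset.sum_congr rfl hterm]
    conv_rhs => rw [Finset.sum_comm]
    refine (Finset.sum_congr rfl fun p _ => ?_).symm
    conv_lhs => rw [Finset.sum_comm]
    refine Finset.sum_congr rfl fun q _ => ?_
    exact UDAux.collapse n _ _ _ _
  · ext n
    rw [map_add, PowerSeries.coeff_mul, PowerSeries.coeff_mul,
      UDAux.morGF_prod_coeff hC hD n]
    set sC := UDAux.rb C hC n with hsC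
    set sD := UDAux.rb D hD n with hsD
    set M1 : ℚ := ∑ p1 ∈ sC, ∑ q1 ∈ sC, ∑ p2 ∈ sD,
      (if C.rank p1 + C.rank q1 + 2 * D.rank p2 = n then
        (C.uStep p1 q1 : ℚ) * ((C.nAut p1 : ℚ))⁻¹ * ((D.nAut p2 : ℚ))⁻¹ else 0) with hM1
    set M2 : ℚ := ∑ p1 ∈ sC, ∑ p2 ∈ sD, ∑ q2 ∈ sD,
      (if 2 * C.rank p1 + (D.rank p2 + D.rank q2) = n then
        ((C.nAut p1 : ℚ))⁻¹ * ((D.uStep p2 q2 : ℚ) * ((D.nAut p2 : ℚ))⁻¹) else 0) with hM2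
    have hsq : ∀ (E : UDData) (hE : E.IsUpdown) (j : ℕ), j ≤ n →
        (PowerSeries.coeff (R := ℚ) j) (UDData.sqSub E.objGF)
          = ∑ p ∈ UDAux.rb E hE n, (if 2 * E.rank p = j then ((E.nAut p : ℚ))⁻¹ else 0) := by
      intro E hE j hj
      rw [UDData.sqSub, PowerSeries.coeff_mk]
      by_cases h2 : 2 ∣ j
      · rw [if_pos h2, UDAux.objGF_coeff, UDAux.objCoeff_eq_sum hE (show j / 2 ≤ n by omega)]
        exact Finset.sum_congr rfl fun p _ => if_congr (by omega) rfl rfl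
      · rw [if_neg h2]
        exact (Finset.sum_eq_zero fun p _ => if_neg (by omega)).symm
    have R1 : (∑ ij ∈ Finset.HasAntidiagonal.antidiagonal n,
        (PowerSeries.coeff (R := ℚ) ij.1) C.morGF
          * (PowerSeries.coeff (R := ℚ) ij.2) (UDData.sqSub D.objGF)) = M1 := by
      have hterm : ∀ ij ∈ Finset.HasAntidiagonal.antidiagonal n,
          (PowerSeries.coeff (R := ℚ) ij.1) C.morGF
            * (PowerSeries.coeff (R := ℚ) ij.2) (UDData.sqSub D.objGF)
          = ∑ p1 ∈ sC, ∑ q1 ∈ sC, ∑ p2 ∈ sD,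
              (if C.rank p1 + C.rank q1 = ij.1 then
                (C.uStep p1 q1 : ℚ) * ((C.nAut p1 : ℚ))⁻¹ else 0)
              * (if 2 * D.rank p2 = ij.2 then ((D.nAut p2 : ℚ))⁻¹ else 0) := by
        rintro ⟨i, j⟩ hij
        rw [Finset.HasAntidiagonal.mem_antidiagonal] at hij
        rw [UDAux.morGF_coeff_eq hC (show i ≤ n by omega), hsq D hD j (by omega),
          Finset.sum_mul]
        refine Finset.sum_congr rfl fun p1 _ => ?_
        rw [Finset.sum_mul]
        exact Finset.sum_congr rfl fun q1 _ => Finset.mul_sum _ _ _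
      rw [Finset.sum_congr rfl hterm, hM1]
      rw [Finset.sum_comm]
      refine Finset.sum_congr rfl fun p1 _ => ?_
      rw [Finset.sum_comm]
      refine Finset.sum_congr rfl fun q1 _ => ?_
      rw [Finset.sum_comm]
      refine Finset.sum_congr rfl fun p2 _ => ?_
      exact UDAux.collapse n _ _ _ _
    have R2 : (∑ ij ∈ Finset.HasAntidiagonal.antidiagonal n,
        (PowerSeries.coeff (R := ℚ) ij.1) (UDData.sqSub C.objGF)
          * (PowerSeries.coeff (R := ℚ) ij.2) D.morGF) = M2 := by
      have hterm : ∀ ij ∈ Finset.HasAntidiagonal.antidiagonal n,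
          (PowerSeries.coeff (R := ℚ) ij.1) (UDData.sqSub C.objGF)
            * (PowerSeries.coeff (R := ℚ) ij.2) D.morGF
          = ∑ p1 ∈ sC, ∑ p2 ∈ sD, ∑ q2 ∈ sD,
              (if 2 * C.rank p1 = ij.1 then ((C.nAut p1 : ℚ))⁻¹ else 0)
              * (if D.rank p2 + D.rank q2 = ij.2 then
                  (D.uStep p2 q2 : ℚ) * ((D.nAut p2 : ℚ))⁻¹ else 0) := by
        rintro ⟨i, j⟩ hij
        rw [Finset.HasAntidiagonal.mem_antidiagonal] at hij
        rw [UDAux.morGF_coeff_eq hD (show j ≤ n by omega), hsq C hC i (by omega),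
          Finset.sum_mul]
        refine Finset.sum_congr rfl fun p1 _ => ?_
        rw [Finset.mul_sum]
        exact Finset.sum_congr rfl fun p2 _ => Finset.mul_sum _ _ _
      rw [Finset.sum_congr rfl hterm, hM2]
      rw [Finset.sum_comm]
      refine Finset.sum_congr rfl fun p1 _ => ?_
      rw [Finset.sum_comm]
      refine Finset.sum_congr rfl fun p2 _ => ?_
      rw [Finset.sum_comm]
      refine Finset.sum_congr rfl fun q2 _ => ?_
      exact UDAux.collapse n _ _ _ _
    rw [R1, R2]
    -- now the left side
    have hpt : ∀ (p1 : C.Obj) (p2 : D.Obj) (q1 : C.Obj) (q2 : D.Obj),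
        (if (C.rank p1 + D.rank p2) + (C.rank q1 + D.rank q2) = n then
          (((C.prod D).uStep (p1, p2) (q1, q2) : ℕ) : ℚ)
            * (((C.prod D).nAut (p1, p2) : ℚ))⁻¹ else 0)
        = (if p2 = q2 then
            (if (C.rank p1 + D.rank p2) + (C.rank q1 + D.rank q2) = n then
              (C.uStep p1 q1 : ℚ) * (((C.nAut p1 : ℚ))⁻¹ * ((D.nAut p2 : ℚ))⁻¹) else 0) else 0)
          + (if p1 = q1 then
            (if (C.rank p1 + D.rank p2) + (C.rank q1 + D.rank q2) = n then
              (D.uStep p2 q2 : ℚ) * (((C.nAut p1 : ℚ))⁻¹ * ((D.nAut p2 : ℚ))⁻¹) else 0) else 0) := by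
      intro p1 p2 q1 q2
      rw [UDAux.uStep_prod hC hD, UDAux.nAut_prod, Nat.cast_mul, mul_inv]
      by_cases hR : (C.rank p1 + D.rank p2) + (C.rank q1 + D.rank q2) = n
      · simp only [if_pos hR]
        by_cases e2 : p2 = q2 <;> by_cases e1 : p1 = q1 <;>
          simp [e1, e2] <;> push_cast <;> ring
      · simp only [if_neg hR]
        simp
    calc (∑ p1 ∈ sC, ∑ p2 ∈ sD, ∑ q1 ∈ sC, ∑ q2 ∈ sD,
          (if (C.rank p1 + D.rank p2) + (C.rank q1 + D.rank q2) = n then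
            (((C.prod D).uStep (p1, p2) (q1, q2) : ℕ) : ℚ)
              * (((C.prod D).nAut (p1, p2) : ℚ))⁻¹ else 0))
        = ∑ p1 ∈ sC, ∑ p2 ∈ sD, ∑ q1 ∈ sC, ∑ q2 ∈ sD,
            ((if p2 = q2 then
              (if (C.rank p1 + D.rank p2) + (C.rank q1 + D.rank q2) = n then
                (C.uStep p1 q1 : ℚ) * (((C.nAut p1 : ℚ))⁻¹ * ((D.nAut p2 : ℚ))⁻¹) else 0) else 0)
            + (if p1 = q1 then
              (if (C.rank p1 + D.rank p2) + (C.rank q1 + D.rank q2) = n then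
                (D.uStep p2 q2 : ℚ) * (((C.nAut p1 : ℚ))⁻¹ * ((D.nAut p2 : ℚ))⁻¹) else 0) else 0)) := by
          exact Finset.sum_congr rfl fun p1 _ => Finset.sum_congr rfl fun p2 _ =>
            Finset.sum_congr rfl fun q1 _ => Finset.sum_congr rfl fun q2 _ => hpt p1 p2 q1 q2
      _ = M1 + M2 := by
          simp only [Finset.sum_add_distrib]
          congr 1
          · rw [hM1]
            refine Finset.sum_congr rfl fun p1 _ => ?_
            rw [Finset.sum_comm]
            refine Finset.sum_congr rfl fun q1 _ => ?_
            refine Finset.sum_congr rfl fun p2 hp2 => ?_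
            rw [Finset.sum_ite_eq sD p2, if_pos hp2]
            exact if_congr (by omega) (by ring) rfl
          · rw [hM2]
            refine Finset.sum_congr rfl fun p1 hp1 => ?_
            refine Finset.sum_congr rfl fun p2 _ => ?_
            rw [Finset.sum_comm]
            refine Finset.sum_congr rfl fun q2 _ => ?_
            rw [Finset.sum_ite_eq sC p1, if_pos hp1]
            exact if_congr (by omega) (by ring) rfl
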